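/- Let E be a real inner product space and τ > 0. Suppose m_{j−1}, m_j, m_{j+1}, v_j ∈ E satisfy m_{j+1} = (4/3) m_j − (1/3) m_{j-1} + (2/3) τ v_j and the tangent-space orthogonality ⟨2 m_j − m_{j-1}, v_j⟩ = 0. Then (3/2)‖m_{j+1}‖² − 2‖m_j‖² + (1/2)‖m_{j-1}‖² = (3/2)‖m_{j+1} − 2 m_j + m_{j-1}‖², i.e., equals (3/2) τ⁴ ‖d_t² m_{j+1}‖². -/

import Mathlib

open scoped RealInnerProductSpace

/-- Nodal modulus identity (equation (3.20)): if `m_{j+1} = (4/3)m_j - (1/3)m_{j-1} + (2/3)τ v_j`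
and `⟨2m_j - m_{j-1}, v_j⟩ = 0`, then
`(3/2)‖m_{j+1}‖² - 2‖m_j‖² + (1/2)‖m_{j-1}‖² = (3/2)‖m_{j+1} - 2m_j + m_{j-1}‖²
  = (3/2) τ⁴ ‖d_t² m_{j+1}‖²`. -/
theorem bdf2_nodal_modulus_identity {E : Type*} [NormedAddCommGroup E] [InnerProductSpace ℝ E]
    (τ : ℝ) (hτ : 0 < τ) (mjm mj mjp vj : E)
    (hstep : mjp = (4/3 : ℝ) • mj - (1/3 : ℝ) • mjm + ((2/3) * τ) • vj)
    (horth : ⟪(2 : ℝ) • mj - mjm, vj⟫ = 0) :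
    (3/2) * ‖mjp‖ ^ 2 - 2 * ‖mj‖ ^ 2 + (1/2) * ‖mjm‖ ^ 2
        = (3/2) * ‖mjp - (2 : ℝ) • mj + mjm‖ ^ 2 ∧
    (3/2) * ‖mjp‖ ^ 2 - 2 * ‖mj‖ ^ 2 + (1/2) * ‖mjm‖ ^ 2
        = (3/2) * τ ^ 4 * ‖(τ ^ 2)⁻¹ • (mjp - (2 : ℝ) • mj + mjm)‖ ^ 2 := by
  have h1 : (3/2) * ‖mjp‖ ^ 2 - 2 * ‖mj‖ ^ 2 + (1/2) * ‖mjm‖ ^ 2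
      = (3/2) * ‖mjp - (2 : ℝ) • mj + mjm‖ ^ 2 := by
    simp only [← real_inner_self_eq_norm_sq, hstep]
    simp only [inner_sub_sub_self, inner_add_add_self, inner_sub_left, inner_sub_right,
      inner_add_left, inner_add_right, real_inner_smul_left, real_inner_smul_right] at horth ⊢
    nlinarith [real_inner_comm mj mjm, real_inner_comm mj vj, real_inner_comm mjm vj]
  refine ⟨h1, ?_⟩
  rw [h1, norm_smul]
  have hτ2 : (0:ℝ) < τ ^ 2 := by positivity
  rw [mul_pow]
  have : ‖(τ ^ 2)⁻¹‖ ^ 2 = (τ^2)⁻¹^2 := by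
    rw [Real.norm_eq_abs, sq_abs]
  rw [this]
  field_simp
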